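/- arXiv:2106.07116 — 4 statements merged into one kernel-verified Lean document; each statement's English description precedes it below -/
import Mathlib

section
/- If S_1, ..., S_ℓ are pairwise disjoint subsets of N and f is a non-negative submodular function, then for any set O ⊆ N, the sum ∑_{i=1}^ℓ f(S_i ∪ O) ≥ (ℓ - 1)·f(O) + f(S_1 ∪ ⋯ ∪ S_ℓ ∪ O). -/
/-- For pairwise disjoint sets S_1,...,S_ℓ and non-negative submodular f,
    ∑ f(S_i ∪ O) ≥ (ℓ-1) f(O) + f(S_1 ∪ ⋯ ∪ S_ℓ ∪ O). -/
theorem disjoint_union_lower_bound {N : Type*} [Fintype N] [DecidableEq N]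
    (f : Finset N → ℝ)
    (hf0 : ∀ A : Finset N, 0 ≤ f A)
    (hsub : ∀ X Y : Finset N, f X + f Y ≥ f (X ∪ Y) + f (X ∩ Y))
    (ℓ : ℕ) (hℓ : 1 ≤ ℓ) (S : Fin ℓ → Finset N)
    (hdisj : ∀ i j : Fin ℓ, i ≠ j → Disjoint (S i) (S j))
    (O : Finset N) :
    ∑ i : Fin ℓ, f (S i ∪ O) ≥
      ((ℓ : ℝ) - 1) * f O + f ((Finset.univ.biUnion S) ∪ O) := by
  induction ℓ, hℓ using Nat.le_induction with
  | base =>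
    have hb : (Finset.univ : Finset (Fin 1)).biUnion S = S 0 := by
      ext x; simp [Fin.fin_one_eq_zero]
    simp [hb]
  | succ n hn ih =>
    set T : Fin n → Finset N := fun i => S i.castSucc with hT
    have hTd : ∀ i j : Fin n, i ≠ j → Disjoint (T i) (T j) := by
      intro i j hij
      exact hdisj _ _ (by simpa [Fin.castSucc_inj] using hij)
    have key := ih T hTd
    have hsum : ∑ i : Fin (n+1), f (S i ∪ O)
        = (∑ i : Fin n, f (T i ∪ O)) + f (S (Fin.last n) ∪ O) := by
      rw [Fin.sum_univ_castSucc]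
    have hbU : (Finset.univ : Finset (Fin (n+1))).biUnion S
        = ((Finset.univ : Finset (Fin n)).biUnion T) ∪ S (Fin.last n) := by
      ext x
      simp only [Finset.mem_biUnion, Finset.mem_univ, true_and, Finset.mem_union, hT]
      constructor
      · rintro ⟨i, hi⟩
        rcases Fin.eq_castSucc_or_eq_last i with ⟨j, rfl⟩ | rfl
        · exact Or.inl ⟨j, hi⟩
        · exact Or.inr hi
      · rintro (⟨j, hj⟩ | h)
        · exact ⟨j.castSucc, hj⟩
        · exact ⟨Fin.last n, h⟩
    -- submodularity step
    set B := (Finset.univ : Finset (Fin n)).biUnion T with hB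
    have hcap : (B ∪ O) ∩ (S (Fin.last n) ∪ O) = O := by
      have hdis : Disjoint B (S (Fin.last n)) := by
        rw [hB, Finset.disjoint_biUnion_left]
        intro i _
        exact hdisj _ _ (Fin.ne_last_of_lt i.castSucc_lt_last)
      ext x
      simp only [Finset.mem_inter, Finset.mem_union]
      constructor
      · rintro ⟨h1 | h1, h2 | h2⟩ <;> first
          | assumption
          | exact absurd h2 (Finset.disjoint_left.mp hdis h1)
      · intro h; exact ⟨Or.inr h, Or.inr h⟩
    have hstep := hsub (B ∪ O) (S (Fin.last n) ∪ O)
    rw [hcap] at hstep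
    have hcup : (B ∪ O) ∪ (S (Fin.last n) ∪ O) = (B ∪ S (Fin.last n)) ∪ O := by
      ext x; simp [Finset.mem_union]; tauto
    rw [hcup] at hstep
    rw [hsum, hbU]
    push_cast
    nlinarith [hf0 O]
end

section
/- Let g be a non-negative submodular function on 2^N and let Y be a random subset of N such that each element of N belongs to Y with probability at most p (not necessarily independently). Then E[g(Y)] ≥ (1 - p)·g(∅). -/
/-- If each element belongs to the random set Y with probability at most p, then
    E[g(Y)] ≥ (1-p)·g(∅) for non-negative submodular g. -/
theorem random_subset_lower_bound {N Ω : Type*} [Fintype N] [DecidableEq N] [Fintype Ω]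
    (μ : Ω → ℝ) (hμ0 : ∀ ω, 0 ≤ μ ω) (hμ1 : ∑ ω, μ ω = 1)
    (g : Finset N → ℝ)
    (hg0 : ∀ A : Finset N, 0 ≤ g A)
    (hsub : ∀ X Y : Finset N, g X + g Y ≥ g (X ∪ Y) + g (X ∩ Y))
    (Y : Ω → Finset N) (p : ℝ) (hp0 : 0 ≤ p) (hp1 : p ≤ 1)
    (hmarg : ∀ u : N, ∑ ω, (if u ∈ Y ω then μ ω else 0) ≤ p) :
    ∑ ω, μ ω * g (Y ω) ≥ (1 - p) * g ∅ := by
  classical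
  set x : N → ℝ := fun u => ∑ ω, (if u ∈ Y ω then μ ω else 0) with hxdef
  have hx0 : ∀ u, 0 ≤ x u := by
    intro u
    apply Finset.sum_nonneg
    intro ω _
    by_cases h : u ∈ Y ω <;> simp [h, hμ0 ω]
  have hxp : ∀ u, x u ≤ p := hmarg
  -- the one-element step inequality
  have step : ∀ (v : N) (T : Finset N), v ∉ T →
      (∑ ω, μ ω * g (Y ω ∩ insert v T)) ≥
        (∑ ω, μ ω * g (Y ω ∩ T)) + x v * (g (insert v T) - g T) := by
    intro v T hvT
    have hpt : ∀ ω, μ ω * g (Y ω ∩ T) +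
        (if v ∈ Y ω then μ ω else 0) * (g (insert v T) - g T) ≤ μ ω * g (Y ω ∩ insert v T) := by
      intro ω
      by_cases hv : v ∈ Y ω
      · have h1 : Y ω ∩ insert v T = insert v (Y ω ∩ T) := by
          ext a
          simp only [Finset.mem_inter, Finset.mem_insert]
          constructor
          · rintro ⟨ha, rfl | ha2⟩
            · exact Or.inl rfl
            · exact Or.inr ⟨ha, ha2⟩
          · rintro (rfl | ⟨ha, ha2⟩)
            · exact ⟨hv, Or.inl rfl⟩
            · exact ⟨ha, Or.inr ha2⟩
        have h3 : insert v (Y ω ∩ T) ∪ T = insert v T := by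
          ext a
          simp only [Finset.mem_union, Finset.mem_insert, Finset.mem_inter]
          tauto
        have h4 : insert v (Y ω ∩ T) ∩ T = Y ω ∩ T := by
          ext a
          simp only [Finset.mem_inter, Finset.mem_insert]
          constructor
          · rintro ⟨rfl | ⟨ha, _⟩, ha2⟩
            · exact absurd ha2 hvT
            · exact ⟨ha, ha2⟩
          · rintro ⟨ha, ha2⟩
            exact ⟨Or.inr ⟨ha, ha2⟩, ha2⟩
        have h2 := hsub (insert v (Y ω ∩ T)) T
        rw [h3, h4] at h2
        rw [h1]
        simp only [hv, if_true]
        nlinarith [hμ0 ω]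
      · have h1 : Y ω ∩ insert v T = Y ω ∩ T := by
          ext a
          simp only [Finset.mem_inter, Finset.mem_insert]
          constructor
          · rintro ⟨ha, rfl | ha2⟩
            · exact absurd ha hv
            · exact ⟨ha, ha2⟩
          · rintro ⟨ha, ha2⟩
            exact ⟨ha, Or.inr ha2⟩
        simp [h1, hv]
    calc (∑ ω, μ ω * g (Y ω ∩ insert v T))
        ≥ ∑ ω, (μ ω * g (Y ω ∩ T) + (if v ∈ Y ω then μ ω else 0) * (g (insert v T) - g T)) :=
          Finset.sum_le_sum (fun ω _ => hpt ω)
      _ = (∑ ω, μ ω * g (Y ω ∩ T)) + x v * (g (insert v T) - g T) := by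
          rw [Finset.sum_add_distrib, ← Finset.sum_mul, hxdef]
  -- key lemma: induction along a sorted list
  have key : ∀ (A : List N), A.Nodup → A.Pairwise (fun a b => x a ≤ x b) →
      ∀ q : ℝ, 0 ≤ q → (∀ u ∈ A, x u ≤ q) →
      (∑ ω, μ ω * g (Y ω ∩ A.toFinset)) ≥
        (1 - q) * g ∅ + (A.head?.elim 0 x) * g A.toFinset := by
    intro A
    induction A with
    | nil =>
      intro _ _ q hq0 _
      have hbase : (∑ ω, μ ω * g (Y ω ∩ (List.toFinset ([] : List N)))) = g ∅ := by
        simp [← Finset.sum_mul, hμ1]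
      rw [hbase]
      simp only [List.head?_nil, Option.elim]
      nlinarith [hg0 (∅ : Finset N)]
    | cons v A' ih =>
      intro hnodup hsorted q hq0 hbound
      have hvA' : v ∉ A' := (List.nodup_cons.mp hnodup).1
      have hnodup' : A'.Nodup := (List.nodup_cons.mp hnodup).2
      have hsorted' : A'.Pairwise (fun a b => x a ≤ x b) := (List.pairwise_cons.mp hsorted).2
      have hle : ∀ b ∈ A', x v ≤ x b := (List.pairwise_cons.mp hsorted).1
      have hvT : v ∉ A'.toFinset := by simpa using hvA'
      have htf : (v :: A').toFinset = insert v A'.toFinset := by simp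
      have hstep := step v A'.toFinset hvT
      have hxvq : x v ≤ q := hbound v (List.mem_cons_self)
      rw [htf]
      simp only [List.head?_cons, Option.elim]
      cases A' with
      | nil =>
        have hbase : (∑ ω, μ ω * g (Y ω ∩ (List.toFinset ([] : List N)))) = g ∅ := by
          simp [← Finset.sum_mul, hμ1]
        rw [hbase] at hstep
        simp only [List.toFinset_nil] at hstep ⊢
        nlinarith [hg0 (∅ : Finset N)]
      | cons w A'' =>
        have hIH := ih hnodup' hsorted' q hq0 (fun u hu => hbound u (List.mem_cons_of_mem v hu))
        simp only [List.head?_cons, Option.elim] at hIH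
        have hvw : x v ≤ x w := hle w (List.mem_cons_self)
        have hnn : 0 ≤ (x w - x v) * g ((w :: A'').toFinset) :=
          mul_nonneg (by linarith) (hg0 _)
        nlinarith [hstep, hIH, hnn]
  -- apply with a sorted enumeration of all of N
  haveI : IsTotal N (fun a b => x a ≤ x b) := ⟨fun a b => le_total (x a) (x b)⟩
  haveI : IsTrans N (fun a b => x a ≤ x b) := ⟨fun a b c => le_trans⟩
  set A : List N := List.insertionSort (fun a b => x a ≤ x b) (Finset.univ : Finset N).toList
    with hA
  have hperm : A.Perm (Finset.univ : Finset N).toList :=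
    List.perm_insertionSort _ _
  have hnodup : A.Nodup := hperm.nodup_iff.mpr (Finset.nodup_toList _)
  have hsorted : A.Pairwise (fun a b => x a ≤ x b) := List.pairwise_insertionSort _ _
  have htf : A.toFinset = (Finset.univ : Finset N) := by
    rw [List.toFinset_eq_of_perm _ _ hperm, Finset.toList_toFinset]
  have hkey := key A hnodup hsorted p hp0 (fun u _ => hxp u)
  rw [htf] at hkey
  have h0 : 0 ≤ (A.head?.elim 0 x) * g (Finset.univ : Finset N) := by
    apply mul_nonneg _ (hg0 _)
    cases A with
    | nil => simp
    | cons v A' => simpa using hx0 v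
  simp only [Finset.inter_univ] at hkey
  linarith
end

section
/- Let (N, I) be a k-system, let S = {z₁,...,z_q} ∈ I be built incrementally (with prefixes S_t), and let Q ∈ I be a set such that every u ∈ Q satisfies S ∪ {u} ∉ I or u ∈ S. Then there exists a mapping σ : Q → S such that (1) for each u ∈ Q, S_{t-1} ∪ {u} ∈ I where z_t = σ(u); (2) each element of S has at most k preimages under σ; and (3) σ(u) = u for every u ∈ Q ∩ S. -/
/-- X is a base (maximal independent subset) of Y. -/
def IsBaseOf {N : Type*} [DecidableEq N] (Indep : Finset N → Prop)
    (X Y : Finset N) : Prop :=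
  X ⊆ Y ∧ Indep X ∧ ∀ u ∈ Y \ X, ¬ Indep (insert u X)

/-- The prefix S_t = {z₁,...,z_t} of the ordered elements z : Fin q → N,
    where `prefixSet z i` collects the elements with index < i. -/
def prefixSet {N : Type*} [DecidableEq N] {q : ℕ} (z : Fin q → N) (i : Fin q) : Finset N :=
  (Finset.univ.filter (fun j : Fin q => j < i)).image z

/-- closed prefix {z₀,...,z_i} -/
private def cPre {N : Type*} [DecidableEq N] {q : ℕ} (z : Fin q → N) (i : Fin q) : Finset N :=
  (Finset.Iic i).image z

private lemma exists_base_ext {N : Type*} [DecidableEq N] (Indep : Finset N → Prop)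
    {T Y : Finset N} (hTY : T ⊆ Y) (hT : Indep T) :
    ∃ B, T ⊆ B ∧ IsBaseOf Indep B Y := by
  classical
  obtain ⟨B, hBmem, hBmax⟩ := Finset.exists_max_image
    (Y.powerset.filter fun X => T ⊆ X ∧ Indep X) Finset.card
    ⟨T, by simp [Finset.mem_filter, Finset.mem_powerset, hTY, hT]⟩
  simp only [Finset.mem_filter, Finset.mem_powerset] at hBmem
  obtain ⟨hBY, hTB, hBI⟩ := hBmem
  refine ⟨B, hTB, hBY, hBI, fun u hu hind => ?_⟩
  have hu' := Finset.mem_sdiff.mp hu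
  have hmem : insert u B ∈ Y.powerset.filter fun X => T ⊆ X ∧ Indep X := by
    simp only [Finset.mem_filter, Finset.mem_powerset]
    exact ⟨Finset.insert_subset hu'.1 hBY, hTB.trans (Finset.subset_insert _ _), hind⟩
  have := hBmax _ hmem
  rw [Finset.card_insert_of_notMem hu'.2] at this
  omega

set_option maxHeartbeats 2000000 in
/-- The mapping lemma: in a k-system, if every element of the independent set Q
    either cannot be added to S = {z₁,...,z_q} or already lies in S, then there is
    a mapping σ : Q → S such that each u ∈ Q can be added to the prefix of S
    preceding σ(u), each element of S has at most k preimages, and σ fixes Q ∩ S. -/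
theorem mapping_lemma {N : Type*} [Fintype N] [DecidableEq N]
    (Indep : Finset N → Prop) (k : ℕ) (hk : 1 ≤ k)
    (hempty : Indep ∅)
    (hdown : ∀ X Y : Finset N, X ⊆ Y → Indep Y → Indep X)
    (hksys : ∀ Y X₁ X₂ : Finset N, IsBaseOf Indep X₁ Y → IsBaseOf Indep X₂ Y →
      X₁.card ≤ k * X₂.card)
    (q : ℕ) (z : Fin q → N) (hzinj : Function.Injective z)
    (S : Finset N) (hSdef : S = Finset.univ.image z) (hS : Indep S)
    (hSpref : ∀ i : Fin q, Indep (insert (z i) (prefixSet z i)))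
    (Q : Finset N) (hQ : Indep Q)
    (hQblock : ∀ u ∈ Q, ¬ Indep (insert u S) ∨ u ∈ S) :
    ∃ σ : {u // u ∈ Q} → Fin q,
      (∀ u : {u // u ∈ Q}, Indep (insert u.val (prefixSet z (σ u)))) ∧
      (∀ t : Fin q, (Finset.univ.filter (fun u : {u // u ∈ Q} => σ u = t)).card ≤ k) ∧
      (∀ u : {u // u ∈ Q}, u.val ∈ S → z (σ u) = u.val) := by
  classical
  cases q with
  | zero =>
    have hQe : ∀ u : {u // u ∈ Q}, False := by
      rintro ⟨u, hu⟩
      rcases hQblock u hu with h | h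
      · rw [hSdef] at h
        simp only [Finset.univ_eq_empty, Finset.image_empty, insert_empty_eq] at h
        exact h (hdown _ Q (Finset.singleton_subset_iff.mpr hu) hQ)
      · rw [hSdef] at h
        simp at h
    exact ⟨fun u => (hQe u).elim, fun u => (hQe u).elim, fun t => t.elim0,
      fun u => (hQe u).elim⟩
  | succ n =>
  -- basic prefix facts
  have hprefix : ∀ i : Fin (n+1), prefixSet z i = (Finset.Iio i).image z := by
    intro i; unfold prefixSet; congr 1; ext j; simp
  have hcPre_insert : ∀ i : Fin (n+1), insert (z i) (prefixSet z i) = cPre z i := by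
    intro i; rw [hprefix, ← Finset.image_insert, Finset.Iio_insert]; rfl
  have hcPre_S : ∀ i : Fin (n+1), cPre z i ⊆ S := by
    intro i; rw [hSdef]; exact Finset.image_subset_image (Finset.subset_univ _)
  have hcPre_mono : ∀ {i j : Fin (n+1)}, i ≤ j → cPre z i ⊆ cPre z j :=
    fun h => Finset.image_subset_image (Finset.Iic_subset_Iic.mpr h)
  have hcPre_last : cPre z (Fin.last n) = S := by
    rw [hSdef]; unfold cPre; congr 1; ext j; simp [Fin.le_last]
  have hcPre_card : ∀ i : Fin (n+1), (cPre z i).card = i.val + 1 := by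
    intro i
    unfold cPre
    rw [Finset.card_image_of_injective _ hzinj, Fin.card_Iic]
  have hcPre_indep : ∀ i : Fin (n+1), Indep (cPre z i) := fun i => hdown _ _ (hcPre_S i) hS
  -- the limit function
  have hfixEx : ∀ u : {u // u ∈ Q}, u.val ∈ S → ∃ j, z j = u.val := by
    intro u hu; rw [hSdef] at hu; simpa using Finset.mem_image.mp hu
  have hnfEx : ∀ u : {u // u ∈ Q}, u.val ∉ S →
      (Finset.univ.filter (fun i : Fin (n+1) => ¬ Indep (insert u.val (cPre z i)))).Nonempty := by
    intro u hu
    refine ⟨Fin.last n, ?_⟩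
    simp only [Finset.mem_filter, Finset.mem_univ, true_and]
    rw [hcPre_last]
    rcases hQblock u.val u.2 with h | h
    · exact h
    · exact absurd h hu
  obtain ⟨lim, hlim_fix, hlim_nf, hlim_min⟩ :
      ∃ lim : {u // u ∈ Q} → Fin (n+1),
        (∀ u, ∀ h : u.val ∈ S, z (lim u) = u.val) ∧
        (∀ u, u.val ∉ S → ¬ Indep (insert u.val (cPre z (lim u)))) ∧
        (∀ u, u.val ∉ S → ∀ i, i < lim u → Indep (insert u.val (cPre z i))) := by
    refine ⟨fun u => if h : u.val ∈ S then Classical.choose (hfixEx u h)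
      else (Finset.univ.filter (fun i : Fin (n+1) =>
        ¬ Indep (insert u.val (cPre z i)))).min' (hnfEx u h), ?_, ?_, ?_⟩
    · intro u h
      dsimp only
      rw [dif_pos h]
      exact Classical.choose_spec (hfixEx u h)
    · intro u h
      dsimp only
      rw [dif_neg h]
      have := Finset.min'_mem _ (hnfEx u h)
      simpa using this
    · intro u h i hi
      dsimp only at hi
      rw [dif_neg h] at hi
      by_contra hni
      have hmem : i ∈ Finset.univ.filter
          (fun i : Fin (n+1) => ¬ Indep (insert u.val (cPre z i))) :=
        Finset.mem_filter.mpr ⟨Finset.mem_univ _, hni⟩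
      have hle := Finset.min'_le _ i hmem
      exact absurd hi (not_lt.mpr hle)
  -- condition (1) for non-fixed elements
  have hpre_indep : ∀ u : {u // u ∈ Q}, u.val ∉ S → ∀ i : Fin (n+1), i ≤ lim u →
      Indep (insert u.val (prefixSet z i)) := by
    intro u hu i hi
    rcases Nat.eq_zero_or_pos i.val with h0 | h0
    · have he : prefixSet z i = ∅ := by
        rw [hprefix]
        have : Finset.Iio i = ∅ := by
          ext j; simp only [Finset.mem_Iio, Finset.notMem_empty, iff_false, not_lt]
          rw [Fin.le_def]; omega
        rw [this, Finset.image_empty]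
      rw [he]
      exact hdown _ Q (by simp [u.2]) hQ
    · have hin : i.val - 1 < n + 1 := by have := i.isLt; omega
      set j : Fin (n+1) := ⟨i.val - 1, hin⟩ with hj
      have hsub : prefixSet z i ⊆ cPre z j := by
        rw [hprefix]
        apply Finset.image_subset_image
        intro a ha
        rw [Finset.mem_Iio, Fin.lt_def] at ha
        rw [Finset.mem_Iic, Fin.le_def]
        simp only [hj]
        omega
      have hjlt : j < lim u := by
        rw [Fin.lt_def]
        rw [Fin.le_def] at hi
        simp only [hj]
        omega
      exact hdown _ _ (Finset.insert_subset_insert _ hsub) (hlim_min u hu j hjlt)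
  -- the counting bound
  have hcount : ∀ t : Fin (n+1),
      (Finset.univ.filter (fun u : {u // u ∈ Q} => lim u ≤ t)).card ≤ k * (t.val + 1) := by
    intro t
    set Qt : Finset N :=
      (Finset.univ.filter (fun u : {u // u ∈ Q} => lim u ≤ t)).image Subtype.val with hQt
    have hQtcard : Qt.card
        = (Finset.univ.filter (fun u : {u // u ∈ Q} => lim u ≤ t)).card :=
      Finset.card_image_of_injective _ Subtype.val_injective
    have hQtQ : Qt ⊆ Q := by
      intro a ha
      rw [hQt, Finset.mem_image] at ha
      obtain ⟨u, _, rfl⟩ := ha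
      exact u.2
    have hQtI : Indep Qt := hdown _ _ hQtQ hQ
    obtain ⟨B, hQtB, hB⟩ := exists_base_ext Indep
      (Finset.subset_union_right : Qt ⊆ cPre z t ∪ Qt) hQtI
    have hbase2 : IsBaseOf Indep (cPre z t) (cPre z t ∪ Qt) := by
      refine ⟨Finset.subset_union_left, hcPre_indep t, ?_⟩
      intro a ha hIa
      rw [Finset.mem_sdiff] at ha
      obtain ⟨haY, hacp⟩ := ha
      have haQt : a ∈ Qt := by
        rcases Finset.mem_union.mp haY with h | h
        · exact absurd h hacp
        · exact h
      rw [hQt, Finset.mem_image] at haQt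
      obtain ⟨u, hu, rfl⟩ := haQt
      rw [Finset.mem_filter] at hu
      have hlimle : lim u ≤ t := hu.2
      by_cases hus : u.val ∈ S
      · apply hacp
        rw [← hlim_fix u hus]
        exact Finset.mem_image_of_mem z (Finset.mem_Iic.mpr hlimle)
      · exact hlim_nf u hus
          (hdown _ _ (Finset.insert_subset_insert _ (hcPre_mono hlimle)) hIa)
    calc (Finset.univ.filter (fun u : {u // u ∈ Q} => lim u ≤ t)).card
        = Qt.card := hQtcard.symm
      _ ≤ B.card := Finset.card_le_card hQtB
      _ ≤ k * (cPre z t).card := hksys _ B (cPre z t) hB hbase2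
      _ = k * (t.val + 1) := by rw [hcPre_card]
  -- Hall's condition
  have hall : ∀ s : Finset {u // u ∈ Q},
      s.card ≤ (s.biUnion (fun u => (if u.val ∈ S then {lim u} else Finset.Iic (lim u))
        ×ˢ (Finset.univ : Finset (Fin k)))).card := by
    intro s
    set B : Finset (Fin (n+1)) :=
      s.biUnion (fun u => if u.val ∈ S then {lim u} else Finset.Iic (lim u)) with hB
    have hprod : s.biUnion (fun u => (if u.val ∈ S then {lim u} else Finset.Iic (lim u))
        ×ˢ (Finset.univ : Finset (Fin k))) = B ×ˢ (Finset.univ : Finset (Fin k)) := by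
      ext ⟨a, b⟩
      simp only [Finset.mem_biUnion, Finset.mem_product, Finset.mem_univ, and_true, hB]
    rw [hprod, Finset.card_product]
    simp only [Finset.card_univ, Fintype.card_fin]
    have hmemB : ∀ u ∈ s, lim u ∈ B := by
      intro u hu
      rw [hB, Finset.mem_biUnion]
      exact ⟨u, hu, by by_cases h : u.val ∈ S <;> simp [h]⟩
    by_cases hnf : ∃ u ∈ s, u.val ∉ S
    · have hne : ((s.filter (fun u => u.val ∉ S)).image lim).Nonempty := by
        obtain ⟨u, hus, hu⟩ := hnf
        exact ⟨lim u, Finset.mem_image_of_mem _ (Finset.mem_filter.mpr ⟨hus, hu⟩)⟩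
      set t := ((s.filter (fun u => u.val ∉ S)).image lim).max' hne with ht
      obtain ⟨u₀, hu₀, hu₀t⟩ := Finset.mem_image.mp (Finset.max'_mem _ hne)
      rw [Finset.mem_filter] at hu₀
      have hIicB : Finset.Iic t ⊆ B := by
        intro a ha
        rw [hB, Finset.mem_biUnion]
        refine ⟨u₀, hu₀.1, ?_⟩
        rw [if_neg hu₀.2, hu₀t]
        exact ha
      have hsplit := Finset.card_filter_add_card_filter_not
        (s := s) (p := fun u => lim u ≤ t)
      have h1 : (s.filter (fun u => lim u ≤ t)).card ≤ k * (t.val + 1) := by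
        refine le_trans (Finset.card_le_card ?_) (hcount t)
        intro u hu
        rw [Finset.mem_filter] at hu ⊢
        exact ⟨Finset.mem_univ _, hu.2⟩
      have h2 : (s.filter (fun u => ¬ lim u ≤ t)).card ≤ (B \ Finset.Iic t).card := by
        apply Finset.card_le_card_of_injOn lim
        · intro u hu
          rw [Finset.mem_coe, Finset.mem_filter] at hu
          rw [Finset.mem_coe, Finset.mem_sdiff]
          exact ⟨hmemB u hu.1, by simpa using hu.2⟩
        · intro u hu v hv huv
          rw [Finset.mem_coe, Finset.mem_filter] at hu hv
          have hufix : u.val ∈ S := by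
            by_contra h
            exact hu.2 (Finset.le_max' _ _
              (Finset.mem_image_of_mem lim (Finset.mem_filter.mpr ⟨hu.1, h⟩)))
          have hvfix : v.val ∈ S := by
            by_contra h
            exact hv.2 (Finset.le_max' _ _
              (Finset.mem_image_of_mem lim (Finset.mem_filter.mpr ⟨hv.1, h⟩)))
          apply Subtype.ext
          rw [← hlim_fix u hufix, ← hlim_fix v hvfix, huv]
      have hcardB : (Finset.Iic t).card + (B \ Finset.Iic t).card = B.card := by
        rw [Nat.add_comm]
        exact Finset.card_sdiff_add_card_eq_card hIicB
      have hbk : (B \ Finset.Iic t).card ≤ k * (B \ Finset.Iic t).card :=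
        Nat.le_mul_of_pos_left _ hk
      calc s.card = (s.filter (fun u => lim u ≤ t)).card
            + (s.filter (fun u => ¬ lim u ≤ t)).card := hsplit.symm
        _ ≤ k * (t.val+1) + k * (B \ Finset.Iic t).card := by
            exact Nat.add_le_add h1 (le_trans h2 hbk)
        _ = k * ((Finset.Iic t).card + (B \ Finset.Iic t).card) := by
            rw [Fin.card_Iic]; ring
        _ = k * B.card := by rw [hcardB]
        _ = B.card * k := Nat.mul_comm _ _
    · push_neg at hnf
      have hle : s.card ≤ B.card := by
        apply Finset.card_le_card_of_injOn lim (fun u hu => hmemB u hu)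
        intro u hu v hv huv
        rw [Finset.mem_coe] at hu hv
        apply Subtype.ext
        rw [← hlim_fix u (hnf u hu), ← hlim_fix v (hnf v hv), huv]
      exact le_trans hle (Nat.le_mul_of_pos_right _ hk)
  obtain ⟨f, hfinj, hfmem⟩ := (Finset.all_card_le_biUnion_card_iff_exists_injective
    (fun u : {u // u ∈ Q} => (if u.val ∈ S then {lim u} else Finset.Iic (lim u))
      ×ˢ (Finset.univ : Finset (Fin k)))).mp hall
  refine ⟨fun u => (f u).1, ?_, ?_, ?_⟩
  · intro u
    dsimp only
    have hm := hfmem u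
    rw [Finset.mem_product] at hm
    by_cases hus : u.val ∈ S
    · rw [if_pos hus] at hm
      have h1 : (f u).1 = lim u := Finset.mem_singleton.mp hm.1
      rw [h1, ← hlim_fix u hus]
      exact hSpref (lim u)
    · rw [if_neg hus] at hm
      exact hpre_indep u hus _ (Finset.mem_Iic.mp hm.1)
  · intro t
    dsimp only
    have hcard : (Finset.univ.filter (fun u : {u // u ∈ Q} => (f u).1 = t)).card
        ≤ (({t} : Finset (Fin (n+1))) ×ˢ (Finset.univ : Finset (Fin k))).card := by
      apply Finset.card_le_card_of_injOn f
      · intro u hu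
        rw [Finset.mem_coe, Finset.mem_filter] at hu
        rw [Finset.mem_coe, Finset.mem_product, Finset.mem_singleton]
        exact ⟨hu.2, Finset.mem_univ _⟩
      · exact fun u _ v _ h => hfinj h
    simpa using hcard
  · intro u hus
    dsimp only
    have hm := hfmem u
    rw [if_pos hus, Finset.mem_product, Finset.mem_singleton] at hm
    rw [hm.1]
    exact hlim_fix u hus
end

section
/- Suppose for each element u in a finite set N, a random process considers u at most once and, when considered with positive marginal weight δ(u) > 0, accepts u (event Y_u = 1) with probability exactly p and rejects u (event X_u = 1) with probability 1 - p, where δ(u) is measurable with respect to the history before u is considered. Then E[∑_u X_u·δ(u)] ≤ ((1-p)/p)·E[∑_u Y_u·δ(u)]. -/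
/-- A rejection/acceptance argument: each element u, when considered (event C), is
    accepted (Y) with conditional probability p and rejected (X) with probability 1-p,
    conditioned on the history H u (with respect to which the weight δ(u) = d u ∘ H u
    is measurable).  Then E[∑ X_u δ(u)] ≤ ((1-p)/p) E[∑ Y_u δ(u)]. -/
theorem rejected_gain_bound {N Ω α : Type*} [Fintype N] [Fintype Ω] [Fintype α]
    [DecidableEq α]
    (μ : Ω → ℝ) (hμ0 : ∀ ω, 0 ≤ μ ω) (hμ1 : ∑ ω, μ ω = 1)
    (p : ℝ) (hp0 : 0 < p) (hp1 : p ≤ 1)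
    (H : N → Ω → α)            -- the history before u is considered
    (d : N → α → ℝ)            -- δ(u) as a function of the history
    (hd0 : ∀ u h, 0 ≤ d u h)
    (X Y C : N → Ω → ℝ)        -- indicators: rejected, accepted, considered (with δ(u) > 0)
    (hX01 : ∀ u ω, X u ω = 0 ∨ X u ω = 1)
    (hY01 : ∀ u ω, Y u ω = 0 ∨ Y u ω = 1)
    (hXYC : ∀ u ω, X u ω + Y u ω = C u ω)  -- considered = accepted or rejected
    (haccept : ∀ u : N, ∀ h : α,
      ∑ ω, (if H u ω = h then μ ω * Y u ω else 0) =
        p * ∑ ω, (if H u ω = h then μ ω * C u ω else 0))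
    (hreject : ∀ u : N, ∀ h : α,
      ∑ ω, (if H u ω = h then μ ω * X u ω else 0) =
        (1 - p) * ∑ ω, (if H u ω = h then μ ω * C u ω else 0)) :
    ∑ ω, μ ω * (∑ u : N, X u ω * d u (H u ω)) ≤
      ((1 - p) / p) * ∑ ω, μ ω * (∑ u : N, Y u ω * d u (H u ω)) := by
  have key : ∀ (Z : N → Ω → ℝ) (u : N),
      ∑ ω, μ ω * (Z u ω * d u (H u ω)) =
        ∑ h, d u h * ∑ ω, (if H u ω = h then μ ω * Z u ω else 0) := by
    intro Z u
    simp_rw [Finset.mul_sum, mul_ite, mul_zero]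
    rw [Finset.sum_comm]
    refine Finset.sum_congr rfl fun ω _ => ?_
    rw [Finset.sum_ite_eq (Finset.univ) (H u ω) (fun h => d u h * (μ ω * Z u ω))]
    simp [mul_comm, mul_assoc, mul_left_comm]
  have expand : ∀ (Z : N → Ω → ℝ),
      ∑ ω, μ ω * (∑ u : N, Z u ω * d u (H u ω)) =
        ∑ u : N, ∑ h, d u h * ∑ ω, (if H u ω = h then μ ω * Z u ω else 0) := by
    intro Z
    have : ∑ ω, μ ω * (∑ u : N, Z u ω * d u (H u ω)) =
        ∑ u : N, ∑ ω, μ ω * (Z u ω * d u (H u ω)) := by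
      simp_rw [Finset.mul_sum]; exact Finset.sum_comm

    rw [this]
    exact Finset.sum_congr rfl fun u _ => key Z u
  rw [expand X, expand Y, Finset.mul_sum]
  apply le_of_eq
  refine Finset.sum_congr rfl fun u _ => ?_
  rw [Finset.mul_sum]
  refine Finset.sum_congr rfl fun h _ => ?_
  rw [hreject u h, haccept u h]
  field_simp
end
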